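/- Let G be a connected finite simple graph of order n ≥ 2, let I be an independent set in G, and let M be a matching in the complement of the induced subgraph G[V(G)\I]. Then χ_md(G) ≤ n − |M| − |I| + 1. -/
import Mathlib


open SimpleGraph

/-- A majority dominator coloring: a proper coloring such that every vertex `v`
dominates at least half of some (nonempty) color class, i.e. there is a color class `C`
with `|C| ≤ 2 * |C ∩ N[v]|`. -/
def SimpleGraph.IsMajorityDominatorColoring {V : Type*} (G : SimpleGraph V) {k : ℕ}
    (c : V → Fin k) : Prop :=
  (∀ u v, G.Adj u v → c u ≠ c v) ∧
  ∀ v : V, ∃ i : Fin k,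
    {u | c u = i}.Nonempty ∧
    {u | c u = i}.ncard ≤ 2 * {u | c u = i ∧ (u = v ∨ G.Adj v u)}.ncard

/-- The majority dominator chromatic number. -/
noncomputable def SimpleGraph.majorityDominatorChromaticNumber {V : Type*}
    (G : SimpleGraph V) : ℕ :=
  sInf {k | ∃ c : V → Fin k, G.IsMajorityDominatorColoring c}

theorem md_le_card_sub_matching_sub_indep {V : Type*} [Fintype V] [DecidableEq V]
    (G : SimpleGraph V) (hG : G.Connected) (hn : 2 ≤ Fintype.card V)
    (I : Finset V) (hI : ∀ u ∈ I, ∀ w ∈ I, ¬ G.Adj u w)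
    (M : Finset (V × V))
    -- M is a matching in the complement of the subgraph induced on V \ I:
    (hMadj : ∀ p ∈ M, p.1 ∉ I ∧ p.2 ∉ I ∧ p.1 ≠ p.2 ∧ ¬ G.Adj p.1 p.2)
    (hMdisj : ∀ p ∈ M, ∀ q ∈ M, p ≠ q →
      p.1 ≠ q.1 ∧ p.1 ≠ q.2 ∧ p.2 ≠ q.1 ∧ p.2 ≠ q.2) :
    G.majorityDominatorChromaticNumber ≤ Fintype.card V - M.card - I.card + 1 := by
  classical
  set n := Fintype.card V with hn'
  set k := n - M.card - I.card + 1 with hk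
  have hV : Nonempty V := Fintype.card_pos_iff.mp (by omega)
  -- choose a representative of I (if nonempty)
  obtain ⟨i0, hi0⟩ : ∃ i0 : V, I.Nonempty → i0 ∈ I := by
    rcases I.eq_empty_or_nonempty with h | h
    · exact ⟨Classical.arbitrary V, fun hne => absurd h hne.ne_empty⟩
    · exact ⟨h.choose, fun _ => h.choose_spec⟩
  -- the representative map
  obtain ⟨r, hrI, hrM, hrS⟩ : ∃ r : V → V,
      (∀ v ∈ I, r v = i0) ∧
      (∀ p ∈ M, r p.2 = p.1) ∧
      (∀ v, v ∉ I → (∀ p ∈ M, v ≠ p.2) → r v = v) := by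
    refine ⟨fun v => if hv : v ∈ I then i0 else
      if h : ∃ p, p ∈ M ∧ p.2 = v then h.choose.1 else v, ?_, ?_, ?_⟩
    · intro v hv; simp [hv]
    · intro p hp
      have h2 : p.2 ∉ I := (hMadj p hp).2.1
      have hex : ∃ q, q ∈ M ∧ q.2 = p.2 := ⟨p, hp, rfl⟩
      beta_reduce
      rw [dif_neg h2, dif_pos hex]
      obtain ⟨hq1, hq2⟩ := hex.choose_spec
      by_cases hqp : hex.choose = p
      · rw [hqp]
      · exact absurd hq2 (hMdisj _ hq1 p hp hqp).2.2.2
    · intro v hv h2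
      beta_reduce
      rw [dif_neg hv, dif_neg]
      rintro ⟨p, hp, hpv⟩
      exact h2 p hp hpv.symm
  have hrP1 : ∀ p ∈ M, r p.1 = p.1 := by
    intro p hp
    refine hrS p.1 (hMadj p hp).1 ?_
    intro q hq h
    by_cases hqp : q = p
    · subst hqp; exact (hMadj q hq).2.2.1 h
    · exact (hMdisj p hp q hq (fun he => hqp he.symm)).2.1 h
  -- trichotomy on vertices
  have htri : ∀ w : V, w ∈ I ∨ (∃ p, p ∈ M ∧ (w = p.1 ∨ w = p.2)) ∨
      (w ∉ I ∧ ∀ p ∈ M, w ≠ p.1 ∧ w ≠ p.2) := by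
    intro w
    by_cases h1 : w ∈ I
    · exact Or.inl h1
    by_cases h2 : ∃ p, p ∈ M ∧ (w = p.1 ∨ w = p.2)
    · exact Or.inr (Or.inl h2)
    · push_neg at h2
      exact Or.inr (Or.inr ⟨h1, fun p hp => h2 p hp⟩)
  -- fibers of r
  have hfibI : ∀ _ : I.Nonempty, ∀ u, r u = i0 → u ∈ I := by
    intro hne u h
    have hi : i0 ∈ I := hi0 hne
    rcases htri u with h1 | ⟨p, hp, h2⟩ | ⟨h1, h2⟩
    · exact h1
    · exfalso
      have hru : r u = p.1 := by
        rcases h2 with rfl | rfl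
        · exact hrP1 p hp
        · exact hrM p hp
      have : p.1 = i0 := hru.symm.trans h
      exact (hMadj p hp).1 (this ▸ hi)
    · exfalso
      have hru : r u = u := hrS u h1 (fun p hp => (h2 p hp).2)
      exact h1 ((hru.symm.trans h) ▸ hi)
  have hfibP : ∀ p ∈ M, ∀ u, r u = p.1 → (u = p.1 ∨ u = p.2) := by
    intro p hp u h
    rcases htri u with h1 | ⟨q, hq, h2⟩ | ⟨h1, h2⟩
    · exfalso
      have hru : r u = i0 := hrI u h1
      have hi : i0 ∈ I := hi0 ⟨u, h1⟩
      exact (hMadj p hp).1 ((hru.symm.trans h).symm ▸ hi)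
    · have hru : r u = q.1 := by
        rcases h2 with rfl | rfl
        · exact hrP1 q hq
        · exact hrM q hq
      have hq1 : q.1 = p.1 := hru.symm.trans h
      by_cases hqp : q = p
      · subst hqp; exact h2
      · exact absurd hq1 (hMdisj q hq p hp hqp).1
    · have hru : r u = u := hrS u h1 (fun q hq => (h2 q hq).2)
      exact Or.inl (hru.symm.trans h)
  have hfibS : ∀ w, w ∉ I → (∀ p ∈ M, w ≠ p.1 ∧ w ≠ p.2) → ∀ u, r u = w → u = w := by
    intro w hw1 hw2 u h
    rcases htri u with h1 | ⟨q, hq, h2⟩ | ⟨h1, h2⟩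
    · exfalso
      have hru : r u = i0 := hrI u h1
      have hi : i0 ∈ I := hi0 ⟨u, h1⟩
      exact hw1 ((hru.symm.trans h) ▸ hi)
    · exfalso
      have hru : r u = q.1 := by
        rcases h2 with rfl | rfl
        · exact hrP1 q hq
        · exact hrM q hq
      exact (hw2 q hq).1 (hru.symm.trans h).symm
    · exact (hrS u h1 (fun q hq => (h2 q hq).2)).symm.trans h
  -- counting the image of r
  set B : Finset V := M.image Prod.snd ∪ I.erase i0 with hB
  have hrB : ∀ v, r v ∉ B := by
    intro v hvB
    rw [hB, Finset.mem_union] at hvB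
    have hsnd : ∀ x ∈ M.image Prod.snd, x ∉ I := by
      intro x hx
      obtain ⟨p, hp, rfl⟩ := Finset.mem_image.mp hx
      exact (hMadj p hp).2.1
    rcases htri v with h1 | ⟨p, hp, h2⟩ | ⟨h1, h2⟩
    · have hrv : r v = i0 := hrI v h1
      have hi : i0 ∈ I := hi0 ⟨v, h1⟩
      rcases hvB with h | h
      · exact hsnd _ h (hrv ▸ hi)
      · rw [hrv] at h
        exact (Finset.mem_erase.mp h).1 rfl
    · have hrv : r v = p.1 := by
        rcases h2 with rfl | rfl
        · exact hrP1 p hp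
        · exact hrM p hp
      rcases hvB with h | h
      · rw [hrv] at h
        obtain ⟨q, hq, hq2⟩ := Finset.mem_image.mp h
        by_cases hqp : q = p
        · subst hqp; exact (hMadj q hq).2.2.1 hq2.symm
        · exact (hMdisj q hq p hp hqp).2.2.1 hq2
      · rw [hrv] at h
        exact (hMadj p hp).1 (Finset.mem_of_mem_erase h)
    · have hrv : r v = v := hrS v h1 (fun q hq => (h2 q hq).2)
      rw [hrv] at hvB
      rcases hvB with h | h
      · obtain ⟨q, hq, hq2⟩ := Finset.mem_image.mp h
        exact (h2 q hq).2 hq2.symm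
      · exact h1 (Finset.mem_of_mem_erase h)
  have hsnd_card : (M.image Prod.snd).card = M.card := by
    apply Finset.card_image_of_injOn
    intro p hp q hq hpq
    by_contra hne
    exact (hMdisj p hp q hq hne).2.2.2 hpq
  have hBdisj : Disjoint (M.image Prod.snd) (I.erase i0) := by
    rw [Finset.disjoint_left]
    intro x hx hx'
    obtain ⟨p, hp, rfl⟩ := Finset.mem_image.mp hx
    exact (hMadj p hp).2.1 (Finset.mem_of_mem_erase hx')
  have hBcard : B.card = M.card + (I.erase i0).card := by
    rw [hB, Finset.card_union_of_disjoint hBdisj, hsnd_card]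
  have hScard : (Finset.univ.image r).card ≤ k := by
    have hsub : Finset.univ.image r ⊆ Finset.univ \ B := by
      intro x hx
      obtain ⟨v, _, rfl⟩ := Finset.mem_image.mp hx
      exact Finset.mem_sdiff.mpr ⟨Finset.mem_univ _, hrB v⟩
    have h1 : (Finset.univ.image r).card ≤ n - B.card := by
      calc (Finset.univ.image r).card ≤ (Finset.univ \ B).card := Finset.card_le_card hsub
        _ = n - B.card := by rw [Finset.card_sdiff_of_subset (Finset.subset_univ B), Finset.card_univ]
    rcases I.eq_empty_or_nonempty with hIe | hIne
    · have : (I.erase i0).card = 0 := by simp [hIe]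
      have hI0 : I.card = 0 := by simp [hIe]
      omega
    · have hi : i0 ∈ I := hi0 hIne
      have he : (I.erase i0).card = I.card - 1 := Finset.card_erase_of_mem hi
      have hI1 : 1 ≤ I.card := Finset.card_pos.mpr hIne
      omega
  -- build the coloring
  set S : Finset V := Finset.univ.image r with hS
  have hmemS : ∀ v, r v ∈ S := fun v => Finset.mem_image.mpr ⟨v, Finset.mem_univ v, rfl⟩
  set c : V → Fin k := fun v => Fin.castLE hScard (S.equivFin ⟨r v, hmemS v⟩) with hc
  have hcc : ∀ u v, c u = c v ↔ r u = r v := by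
    intro u v
    constructor
    · intro h
      have h1 : S.equivFin ⟨r u, hmemS u⟩ = S.equivFin ⟨r v, hmemS v⟩ :=
        Fin.castLE_injective hScard h
      have h2 := S.equivFin.injective h1
      exact congrArg Subtype.val h2
    · intro h
      exact congrArg (fun x => Fin.castLE hScard (S.equivFin x)) (Subtype.ext h)
  apply Nat.sInf_le
  refine ⟨c, ?_, ?_⟩
  · -- proper
    intro u v huv hcuv
    have hr : r u = r v := (hcc u v).1 hcuv
    rcases htri u with h1 | ⟨p, hp, h2⟩ | ⟨h1, h2⟩
    · have hu : r u = i0 := hrI u h1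
      have hv : v ∈ I := hfibI ⟨u, h1⟩ v (hr.symm.trans hu)
      exact hI u h1 v hv huv
    · have hu : r u = p.1 := by
        rcases h2 with rfl | rfl
        · exact hrP1 p hp
        · exact hrM p hp
      have hv : v = p.1 ∨ v = p.2 := hfibP p hp v (hr.symm.trans hu)
      have hne : u ≠ v := G.ne_of_adj huv
      rcases h2 with rfl | rfl <;> rcases hv with rfl | rfl
      · exact hne rfl
      · exact (hMadj p hp).2.2.2 huv
      · exact (hMadj p hp).2.2.2 huv.symm
      · exact hne rfl
    · have hu : r u = u := hrS u h1 (fun p hp => (h2 p hp).2)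
      have hv : v = u := hfibS u h1 h2 v (hr.symm.trans hu)
      exact G.ne_of_adj huv hv.symm
  · -- majority dominator
    intro v
    obtain ⟨w, hwd, hwI⟩ : ∃ w, (w = v ∨ G.Adj v w) ∧ w ∉ I := by
      by_cases hv : v ∈ I
      · obtain ⟨w, hw⟩ : ∃ w, G.Adj v w := by
          obtain ⟨u, hu⟩ := Fintype.exists_ne_of_one_lt_card (by omega : 1 < Fintype.card V) v
          obtain ⟨p⟩ := hG.preconnected v u
          cases p with
          | nil => exact absurd rfl hu
          | cons h q => exact ⟨_, h⟩
        exact ⟨w, Or.inr hw, fun hwI => hI v hv w hwI hw⟩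
      · exact ⟨v, Or.inl rfl, hv⟩
    refine ⟨c w, ⟨w, rfl⟩, ?_⟩
    have hclass : {u | c u = c w} = {u | r u = r w} := Set.ext fun u => hcc u w
    have hsub2 : {u | c u = c w}.ncard ≤ 2 := by
      rw [hclass]
      rcases htri w with h1 | ⟨p, hp, h2⟩ | ⟨h1, h2⟩
      · exact absurd h1 hwI
      · have hw1 : r w = p.1 := by
          rcases h2 with rfl | rfl
          · exact hrP1 p hp
          · exact hrM p hp
        have hset : {u | r u = r w} ⊆ {p.1, p.2} := by
          intro u hu
          rcases hfibP p hp u (hu.trans hw1) with rfl | rfl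
          · exact Set.mem_insert _ _
          · exact Set.mem_insert_of_mem _ rfl
        calc {u | r u = r w}.ncard ≤ ({p.1, p.2} : Set V).ncard :=
              Set.ncard_le_ncard hset (Set.toFinite _)
          _ ≤ 2 := by
              rw [Set.ncard_pair (hMadj p hp).2.2.1]
      · have hset : {u | r u = r w} ⊆ {w} := by
          intro u hu
          have hrw : r w = w := hrS w h1 (fun q hq => (h2 q hq).2)
          exact hfibS w h1 h2 u (hu.trans hrw)
        calc {u | r u = r w}.ncard ≤ ({w} : Set V).ncard :=
              Set.ncard_le_ncard hset (Set.toFinite _)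
          _ ≤ 2 := by rw [Set.ncard_singleton]; omega
    have h1le : 1 ≤ {u | c u = c w ∧ (u = v ∨ G.Adj v u)}.ncard := by
      have hmem : w ∈ {u | c u = c w ∧ (u = v ∨ G.Adj v u)} := ⟨rfl, hwd⟩
      exact (Set.ncard_pos (Set.toFinite _)).mpr ⟨w, hmem⟩
    omega
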